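/- arXiv:2105.13181 — 4 statements merged into one kernel-verified Lean document; each statement's English description precedes it below -/
import Mathlib

section
/- Let R(λ) be invertible, T(λ) = [R(λ)⁻¹; λR(λ)⁻¹; W₁(λ)R(λ)⁻¹] with W₁(λ) = (A − λE)⁻¹B, and let v be a unit right singular vector of T(λ) corresponding to its largest singular value σ_max(T(λ)). Define ΔA₀ = −v(R(λ)⁻¹v)*/σ_max(T(λ))², ΔA₁ = −λ̄·v(R(λ)⁻¹v)*/σ_max(T(λ))², ΔC = −v(W₁(λ)R(λ)⁻¹v)*/σ_max(T(λ))². Then (R(λ) + ΔA₀ + λΔA₁ + ΔC(A − λE)⁻¹B)·R(λ)⁻¹v = 0, i.e. the perturbed matrix R(λ) + ΔR(λ) is singular. -/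
open Matrix BigOperators

noncomputable def evnorm {n : Type*} [Fintype n] (v : n → ℂ) : ℝ :=
  Real.sqrt (∑ i, ‖v i‖ ^ 2)

noncomputable def frob {m n : Type*} [Fintype m] [Fintype n] (M : Matrix m n ℂ) : ℝ :=
  Real.sqrt (∑ i, ∑ j, ‖M i j‖ ^ 2)

noncomputable def sigmaMax {m n : Type*} [Fintype m] [Fintype n] (T : Matrix m n ℂ) : ℝ :=
  sSup {x | ∃ v, evnorm v = 1 ∧ x = evnorm (T.mulVec v)}

noncomputable def sigmaMin {m n : Type*} [Fintype m] [Fintype n] (T : Matrix m n ℂ) : ℝ :=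
  sInf {x | ∃ v, evnorm v = 1 ∧ x = evnorm (T.mulVec v)}

def hcat3 {i a b c : Type*} (A : Matrix i a ℂ) (B : Matrix i b ℂ) (C : Matrix i c ℂ) :
    Matrix i (a ⊕ b ⊕ c) ℂ :=
  Matrix.of fun x j => match j with
    | Sum.inl j => A x j
    | Sum.inr (Sum.inl j) => B x j
    | Sum.inr (Sum.inr j) => C x j

def vcat3 {a b c j : Type*} (A : Matrix a j ℂ) (B : Matrix b j ℂ) (C : Matrix c j ℂ) :
    Matrix (a ⊕ b ⊕ c) j ℂ :=
  Matrix.of fun i y => match i with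
    | Sum.inl i => A i y
    | Sum.inr (Sum.inl i) => B i y
    | Sum.inr (Sum.inr i) => C i y

noncomputable def Lnorm (m : ℕ) (μ : ℂ) : ℝ :=
  Real.sqrt (∑ i ∈ Finset.range (m + 1), ‖μ‖ ^ (2 * i))

lemma vecMulVec_mulVec_aux {k l : Type*} [Fintype l] (a : k → ℂ) (w : l → ℂ) (x : l → ℂ) :
    (Matrix.vecMulVec a w).mulVec x = (w ⬝ᵥ x) • a := by
  ext i
  simp [Matrix.vecMulVec, Matrix.mulVec, dotProduct, Finset.mul_sum, mul_comm,
    mul_left_comm, Pi.smul_apply, smul_eq_mul]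

theorem stmt2 {n r : ℕ} (μ : ℂ)
    (A0 A1 : Matrix (Fin n) (Fin n) ℂ)
    (A E : Matrix (Fin r) (Fin r) ℂ) (B : Matrix (Fin r) (Fin n) ℂ)
    (C : Matrix (Fin n) (Fin r) ℂ)
    (hAE : IsUnit (A - μ • E))
    (R : Matrix (Fin n) (Fin n) ℂ)
    (hR : R = A0 + μ • A1 + C * ((A - μ • E)⁻¹ * B))
    (hRu : IsUnit R)
    (T : Matrix (Fin n ⊕ Fin n ⊕ Fin r) (Fin n) ℂ)
    (hT : T = vcat3 R⁻¹ (μ • R⁻¹) ((A - μ • E)⁻¹ * B * R⁻¹))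
    (v : Fin n → ℂ) (hv : evnorm v = 1)
    (hsing : (Tᴴ * T).mulVec v = ((sigmaMax T : ℂ) ^ 2) • v)
    (ΔA0 ΔA1 : Matrix (Fin n) (Fin n) ℂ) (ΔC : Matrix (Fin n) (Fin r) ℂ)
    (hΔA0 : ΔA0 = -(((sigmaMax T : ℂ) ^ 2)⁻¹ • vecMulVec v (star (R⁻¹.mulVec v))))
    (hΔA1 : ΔA1 = -((starRingEnd ℂ μ * ((sigmaMax T : ℂ) ^ 2)⁻¹) •
        vecMulVec v (star (R⁻¹.mulVec v))))
    (hΔC : ΔC = -(((sigmaMax T : ℂ) ^ 2)⁻¹ •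
        vecMulVec v (star (((A - μ • E)⁻¹ * B * R⁻¹).mulVec v)))) :
    (R + (ΔA0 + μ • ΔA1 + ΔC * ((A - μ • E)⁻¹ * B))).mulVec (R⁻¹.mulVec v) = 0 := by
  set σ2 : ℂ := (sigmaMax T : ℂ) ^ 2 with hσ2
  set u : Fin n → ℂ := R⁻¹.mulVec v with hu
  set w : Fin r → ℂ := ((A - μ • E)⁻¹ * B * R⁻¹).mulVec v with hw
  -- star v ⬝ᵥ v = 1
  have hvv : star v ⬝ᵥ v = 1 := by
    have h1 : (∑ i, ‖v i‖ ^ 2) = 1 := by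
      have := hv
      unfold evnorm at this
      have hnn : (0:ℝ) ≤ ∑ i, ‖v i‖ ^ 2 :=
        Finset.sum_nonneg fun i _ => by positivity
      nlinarith [Real.sq_sqrt hnn, this]
    have : star v ⬝ᵥ v = ((∑ i, ‖v i‖ ^ 2 : ℝ) : ℂ) := by
      simp only [dotProduct, Pi.star_apply]
      push_cast
      congr 1
      ext i
      rw [RCLike.star_def, RCLike.conj_mul]
      norm_cast
    rw [this, h1]; norm_num
  -- T.mulVec v components
  have hTv : ∀ i, T.mulVec v i = Sum.elim u (Sum.elim (μ • u) w) i := by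
    intro i
    cases i with
    | inl i =>
        simp [hT, hu, vcat3, Matrix.mulVec, dotProduct]
    | inr i =>
        cases i with
        | inl i =>
            simp [hT, hu, vcat3, Matrix.mulVec, dotProduct, Finset.mul_sum, mul_assoc]
        | inr i =>
            simp [hT, hw, vcat3, Matrix.mulVec, dotProduct]
  have hTv' : T.mulVec v = Sum.elim u (Sum.elim (μ • u) w) := funext hTv
  have h1 : star (T.mulVec v) ⬝ᵥ T.mulVec v = star v ⬝ᵥ (Tᴴ * T).mulVec v := by
    rw [Matrix.star_mulVec, Matrix.dotProduct_mulVec, Matrix.dotProduct_mulVec,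
      Matrix.vecMul_vecMul]
  have h2 : star v ⬝ᵥ (Tᴴ * T).mulVec v = σ2 := by
    rw [hsing, dotProduct_smul, hvv]; simp
  -- key scalar identity
  have hkey : star u ⬝ᵥ u + (starRingEnd ℂ μ * μ) * (star u ⬝ᵥ u) + star w ⬝ᵥ w = σ2 := by
    have hsum : star (T.mulVec v) ⬝ᵥ T.mulVec v
        = star u ⬝ᵥ u + (star (μ • u) ⬝ᵥ (μ • u) + star w ⬝ᵥ w) := by
      rw [hTv']
      simp only [dotProduct, Fintype.sum_sum_type, Sum.elim_inl, Sum.elim_inr,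
        Pi.star_apply]
    have hmu : star (μ • u) ⬝ᵥ (μ • u) = (starRingEnd ℂ μ * μ) * (star u ⬝ᵥ u) := by
      simp only [dotProduct, Pi.star_apply, Pi.smul_apply, smul_eq_mul, star_mul',
        RCLike.star_def, Finset.mul_sum]
      apply Finset.sum_congr rfl
      intro x _
      ring
    rw [← h2, ← h1, hsum, hmu]; ring
  by_cases hσ : σ2 = 0
  · -- degenerate case: T.mulVec v = 0 hence u = 0
    have h0 : star (T.mulVec v) ⬝ᵥ T.mulVec v = 0 := by rw [h1, h2, hσ]
    have hreal : (∑ i, Complex.normSq (T.mulVec v i)) = 0 := by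
      have hcast : ((∑ i, Complex.normSq (T.mulVec v i) : ℝ) : ℂ)
          = star (T.mulVec v) ⬝ᵥ T.mulVec v := by
        push_cast
        simp [dotProduct, Complex.normSq_eq_conj_mul_self]
      exact_mod_cast hcast.trans h0
    have hTv0 : T.mulVec v = 0 := by
      ext i
      have hz := (Finset.sum_eq_zero_iff_of_nonneg
        (fun i _ => Complex.normSq_nonneg _)).mp hreal i (Finset.mem_univ i)
      exact Complex.normSq_eq_zero.mp hz
    have hu0 : u = 0 := by
      ext i
      have := congrFun hTv0 (Sum.inl i)
      rw [hTv (Sum.inl i)] at this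
      simpa using this
    rw [hu0, Matrix.mulVec_zero]
  · -- main case
    have hRRinv : R * R⁻¹ = 1 :=
      Matrix.mul_nonsing_inv R ((Matrix.isUnit_iff_isUnit_det R).mp hRu)
    have hRu' : R.mulVec u = v := by
      rw [hu, Matrix.mulVec_mulVec, hRRinv, Matrix.one_mulVec]
    have hwu : ((A - μ • E)⁻¹ * B).mulVec u = w := by
      rw [hu, Matrix.mulVec_mulVec, hw, Matrix.mul_assoc]
    rw [Matrix.add_mulVec, hRu', Matrix.add_mulVec, Matrix.add_mulVec,
      ← Matrix.mulVec_mulVec, hwu, hΔA0, hΔA1, hΔC, smul_neg, smul_smul,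
      Matrix.neg_mulVec, Matrix.neg_mulVec, Matrix.neg_mulVec,
      Matrix.smul_mulVec, Matrix.smul_mulVec, Matrix.smul_mulVec,
      vecMulVec_mulVec_aux, vecMulVec_mulVec_aux]
    have hfin : σ2⁻¹ • (star u ⬝ᵥ u) • v
        + (μ * (starRingEnd ℂ μ * σ2⁻¹)) • (star u ⬝ᵥ u) • v
        + σ2⁻¹ • (star w ⬝ᵥ w) • v = v := by
      rw [smul_smul, smul_smul, smul_smul, ← add_smul, ← add_smul]
      have hc : σ2⁻¹ * (star u ⬝ᵥ u) + μ * (starRingEnd ℂ μ * σ2⁻¹) * (star u ⬝ᵥ u)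
          + σ2⁻¹ * (star w ⬝ᵥ w)
          = σ2⁻¹ * (star u ⬝ᵥ u + (starRingEnd ℂ μ * μ) * (star u ⬝ᵥ u) + star w ⬝ᵥ w) := by
        ring
      rw [hc, hkey, inv_mul_cancel₀ hσ, one_smul]
    calc v + (-(σ2⁻¹ • (star u ⬝ᵥ u) • v)
          + -((μ * (starRingEnd ℂ μ * σ2⁻¹)) • (star u ⬝ᵥ u) • v)
          + -(σ2⁻¹ • (star w ⬝ᵥ w) • v))
        = v - (σ2⁻¹ • (star u ⬝ᵥ u) • v
          + (μ * (starRingEnd ℂ μ * σ2⁻¹)) • (star u ⬝ᵥ u) • v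
          + σ2⁻¹ • (star w ⬝ᵥ w) • v) := by abel
      _ = v - v := by rw [hfin]
      _ = 0 := sub_self v
end

section
/- With the notation of the previous statement (Δ constructed from a top right singular vector v of T(λ)), the Frobenius norm of the block perturbation Δ = [ΔA₀ ΔA₁ ΔC] satisfies ‖Δ‖_F = 1/σ_max(T(λ)). -/
open Matrix BigOperators

theorem stmt3 {n r : ℕ} (μ : ℂ)
    (A0 A1 : Matrix (Fin n) (Fin n) ℂ)
    (A E : Matrix (Fin r) (Fin r) ℂ) (B : Matrix (Fin r) (Fin n) ℂ)
    (C : Matrix (Fin n) (Fin r) ℂ)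
    (hAE : IsUnit (A - μ • E))
    (R : Matrix (Fin n) (Fin n) ℂ)
    (hR : R = A0 + μ • A1 + C * ((A - μ • E)⁻¹ * B))
    (hRu : IsUnit R)
    (T : Matrix (Fin n ⊕ Fin n ⊕ Fin r) (Fin n) ℂ)
    (hT : T = vcat3 R⁻¹ (μ • R⁻¹) ((A - μ • E)⁻¹ * B * R⁻¹))
    (hσ : 0 < sigmaMax T)
    (v : Fin n → ℂ) (hv : evnorm v = 1)
    (hsing : (Tᴴ * T).mulVec v = ((sigmaMax T : ℂ) ^ 2) • v)
    (ΔA0 ΔA1 : Matrix (Fin n) (Fin n) ℂ) (ΔC : Matrix (Fin n) (Fin r) ℂ)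
    (hΔA0 : ΔA0 = -(((sigmaMax T : ℂ) ^ 2)⁻¹ • vecMulVec v (star (R⁻¹.mulVec v))))
    (hΔA1 : ΔA1 = -((starRingEnd ℂ μ * ((sigmaMax T : ℂ) ^ 2)⁻¹) •
        vecMulVec v (star (R⁻¹.mulVec v))))
    (hΔC : ΔC = -(((sigmaMax T : ℂ) ^ 2)⁻¹ •
        vecMulVec v (star (((A - μ • E)⁻¹ * B * R⁻¹).mulVec v)))) :
    frob (hcat3 ΔA0 ΔA1 ΔC) = 1 / sigmaMax T := by
  set s := sigmaMax T with hs
  have hv1 : ∑ i, ‖v i‖ ^ 2 = 1 := by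
    have hnn : 0 ≤ ∑ i, ‖v i‖ ^ 2 := Finset.sum_nonneg fun i _ => sq_nonneg _
    have h := hv
    unfold evnorm at h
    nlinarith [Real.sq_sqrt hnn]
  set w0 := R⁻¹.mulVec v with hw0
  set wC := ((A - μ • E)⁻¹ * B * R⁻¹).mulVec v with hwC
  -- dot product identity
  have hdotC : (↑(∑ i, ‖T.mulVec v i‖ ^ 2) : ℂ) = (s : ℂ) ^ 2 := by
    have h1 : star v ⬝ᵥ ((Tᴴ * T).mulVec v) = star (T.mulVec v) ⬝ᵥ (T.mulVec v) := by
      rw [← Matrix.mulVec_mulVec, Matrix.dotProduct_mulVec, Matrix.star_mulVec]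
    have h2 : star v ⬝ᵥ ((Tᴴ * T).mulVec v) = (s : ℂ) ^ 2 := by
      rw [hsing, dotProduct_smul]
      have : star v ⬝ᵥ v = (↑(∑ i, ‖v i‖ ^ 2) : ℂ) := by
        simp only [dotProduct, Pi.star_apply, Complex.ofReal_sum]
        refine Finset.sum_congr rfl fun i _ => ?_
        rw [mul_comm, Complex.star_def, Complex.mul_conj, Complex.normSq_eq_norm_sq]
      rw [this, hv1]
      simp
    have h3 : star (T.mulVec v) ⬝ᵥ (T.mulVec v) = (↑(∑ i, ‖T.mulVec v i‖ ^ 2) : ℂ) := by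
      simp only [dotProduct, Pi.star_apply, Complex.ofReal_sum]
      refine Finset.sum_congr rfl fun i _ => ?_
      rw [mul_comm, Complex.star_def, Complex.mul_conj, Complex.normSq_eq_norm_sq]
    rw [← h3, ← h1, h2]
  have hdotR : ∑ i, ‖T.mulVec v i‖ ^ 2 = s ^ 2 := by exact_mod_cast hdotC
  -- components of T.mulVec v
  have hc1 : ∀ i, T.mulVec v (Sum.inl i) = w0 i := by
    intro i; simp [hT, vcat3, Matrix.mulVec, dotProduct, hw0]
  have hc2 : ∀ i, T.mulVec v (Sum.inr (Sum.inl i)) = μ * w0 i := by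
    intro i
    simp [hT, vcat3, Matrix.mulVec, dotProduct, hw0, Finset.mul_sum, mul_assoc]
  have hc3 : ∀ i, T.mulVec v (Sum.inr (Sum.inr i)) = wC i := by
    intro i; simp [hT, vcat3, Matrix.mulVec, dotProduct, hwC]
  have key : (∑ j, ‖w0 j‖ ^ 2) + ‖μ‖ ^ 2 * (∑ j, ‖w0 j‖ ^ 2) + (∑ j, ‖wC j‖ ^ 2) = s ^ 2 := by
    rw [← hdotR, Fintype.sum_sum_type, Fintype.sum_sum_type]
    simp only [hc1, hc2, hc3, norm_mul, mul_pow, Finset.mul_sum]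
    ring
  have hns : ‖((s : ℂ) ^ 2)⁻¹‖ = (s ^ 2)⁻¹ := by
    rw [norm_inv, norm_pow, Complex.norm_real, Real.norm_eq_abs, abs_of_pos hσ]
  -- entrywise norms
  have e0 : ∀ i j, ‖ΔA0 i j‖ ^ 2 = (s ^ 2)⁻¹ ^ 2 * (‖v i‖ ^ 2 * ‖w0 j‖ ^ 2) := by
    intro i j
    simp only [hΔA0, Matrix.neg_apply, Matrix.smul_apply, Matrix.vecMulVec_apply,
      Pi.star_apply, smul_eq_mul, norm_neg, norm_mul, mul_pow, norm_star, hns, ← hw0]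
  have e1 : ∀ i j, ‖ΔA1 i j‖ ^ 2 = ‖μ‖ ^ 2 * ((s ^ 2)⁻¹ ^ 2 * (‖v i‖ ^ 2 * ‖w0 j‖ ^ 2)) := by
    intro i j
    simp only [hΔA1, Matrix.neg_apply, Matrix.smul_apply, Matrix.vecMulVec_apply,
      Pi.star_apply, smul_eq_mul, norm_neg, norm_mul, mul_pow, norm_star, hns, ← hw0,
      RingHomIsometric.norm_map]
    ring
  have eC : ∀ i j, ‖ΔC i j‖ ^ 2 = (s ^ 2)⁻¹ ^ 2 * (‖v i‖ ^ 2 * ‖wC j‖ ^ 2) := by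
    intro i j
    simp only [hΔC, Matrix.neg_apply, Matrix.smul_apply, Matrix.vecMulVec_apply,
      Pi.star_apply, smul_eq_mul, norm_neg, norm_mul, mul_pow, norm_star, hns, ← hwC]
  unfold frob
  have hsum : ∑ i, ∑ j, ‖hcat3 ΔA0 ΔA1 ΔC i j‖ ^ 2 = (s ^ 2)⁻¹ := by
    have : ∀ i : Fin n, ∑ j : Fin n ⊕ Fin n ⊕ Fin r, ‖hcat3 ΔA0 ΔA1 ΔC i j‖ ^ 2
        = ‖v i‖ ^ 2 * ((s ^ 2)⁻¹ ^ 2 * s ^ 2) := by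
      intro i
      rw [Fintype.sum_sum_type, Fintype.sum_sum_type]
      simp only [hcat3, Matrix.of_apply]
      simp only [e0, e1, eC, ← Finset.mul_sum]
      linear_combination (‖v i‖ ^ 2 * ((s ^ 2)⁻¹ ^ 2)) * key
    rw [Finset.sum_congr rfl fun i _ => this i, ← Finset.sum_mul, hv1, one_mul]
    field_simp
  rw [hsum]
  rw [Real.sqrt_inv, Real.sqrt_sq hσ.le, one_div]
end

section
/- Let R(λ) = A₀ + λA₁ + C(A − λE)⁻¹B be invertible, Ŵ(λ) = C(A − λE)⁻¹, S(λ) = [R(λ)⁻¹, λR(λ)⁻¹, R(λ)⁻¹Ŵ(λ)], and suppose S(λ) has full row rank (so S(λ)S(λ)* is invertible). Let v be a unit right singular vector of S(λ) for σ_min(S(λ)), the smallest singular value, and set Z(λ) = (S(λ)S(λ)*)⁻¹. Define ΔA₀ = −(R(λ)⁻¹)*Z(λ)vv*, ΔA₁ = −λ̄(R(λ)⁻¹)*Z(λ)vv*, ΔB = −(R(λ)⁻¹Ŵ(λ))*Z(λ)vv*. Then (I + R(λ)⁻¹(ΔA₀ + λΔA₁ + Ŵ(λ)ΔB))v = 0,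 so R(λ) + ΔR(λ) is singular, and the block perturbation Δ = [ΔA₀; ΔA₁; ΔB] satisfies ‖Δ‖_F = 1/σ_min(S(λ)). -/
open Matrix BigOperators

lemma conjTranspose_hcat3 {i a b c : Type*} (A : Matrix i a ℂ) (B : Matrix i b ℂ)
    (C : Matrix i c ℂ) : (hcat3 A B C)ᴴ = vcat3 Aᴴ Bᴴ Cᴴ := by
  ext x y
  rcases x with x | x | x <;> rfl

lemma hcat3_mul_vcat3 {i a b c j : Type*} [Fintype a] [Fintype b] [Fintype c]
    (A : Matrix i a ℂ) (B : Matrix i b ℂ) (C : Matrix i c ℂ)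
    (D : Matrix a j ℂ) (E : Matrix b j ℂ) (F : Matrix c j ℂ) :
    hcat3 A B C * vcat3 D E F = A * D + B * E + C * F := by
  ext x y
  simp [Matrix.mul_apply, hcat3, vcat3, Fintype.sum_sum_type, Matrix.add_apply, add_assoc]

lemma vcat3_mul {a b c i j : Type*} [Fintype i] (A : Matrix a i ℂ) (B : Matrix b i ℂ)
    (C : Matrix c i ℂ) (M : Matrix i j ℂ) :
    vcat3 A B C * M = vcat3 (A * M) (B * M) (C * M) := by
  ext x y
  rcases x with x | x | x <;> rfl

lemma neg_vcat3 {a b c j : Type*} (A : Matrix a j ℂ) (B : Matrix b j ℂ) (C : Matrix c j ℂ) :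
    -vcat3 A B C = vcat3 (-A) (-B) (-C) := by
  ext x y; rcases x with x | x | x <;> rfl

lemma mul_vecMulVec' {i j k : Type*} [Fintype j] (M : Matrix i j ℂ) (v : j → ℂ) (w : k → ℂ) :
    M * vecMulVec v w = vecMulVec (M.mulVec v) w := by
  ext x y
  simp [Matrix.mul_apply, vecMulVec_apply, Matrix.mulVec, dotProduct,
    Finset.sum_mul, mul_assoc]

lemma star_mul_self_eq_norm_sq (z : ℂ) : star z * z = ((‖z‖ : ℂ)) ^ 2 := by
  rw [Complex.star_def, ← Complex.normSq_eq_conj_mul_self, ← Complex.ofReal_pow,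
    Complex.sq_norm]

lemma key_aux {N R : Type*} [Fintype N] [Fintype R] [DecidableEq N] (μ : ℂ)
    (X : Matrix N N ℂ) (G : Matrix N R ℂ) (Z P : Matrix N N ℂ) :
    X * (-(Xᴴ * Z * P) + μ • -(starRingEnd ℂ μ • (Xᴴ * Z * P)) + G * -((X * G)ᴴ * Z * P))
      = -((X * Xᴴ + (μ • X) * (μ • X)ᴴ + (X * G) * (X * G)ᴴ) * (Z * P)) := by
  simp only [Matrix.conjTranspose_smul, starRingEnd_apply, Matrix.mul_neg,
    Matrix.neg_mul, Matrix.mul_smul, Matrix.smul_mul, smul_smul, Matrix.mul_assoc,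
    Matrix.mul_add, Matrix.add_mul, smul_neg, neg_add, neg_neg, Matrix.conjTranspose_mul]
  simp only [mul_comm (star μ) μ]

lemma vcat_aux {N R : Type*} [Fintype N] [Fintype R] (μ : ℂ)
    (X : Matrix N N ℂ) (G : Matrix N R ℂ) (Z P : Matrix N N ℂ) :
    vcat3 (-(Xᴴ * Z * P)) (-(starRingEnd ℂ μ • (Xᴴ * Z * P))) (-((X * G)ᴴ * Z * P))
      = -(vcat3 Xᴴ (μ • X)ᴴ (X * G)ᴴ * (Z * P)) := by
  rw [vcat3_mul, neg_vcat3]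
  simp only [Matrix.mul_assoc, Matrix.conjTranspose_smul, Matrix.smul_mul, starRingEnd_apply]

theorem stmt6 {n r : ℕ} (μ : ℂ)
    (A0 A1 : Matrix (Fin n) (Fin n) ℂ)
    (A E : Matrix (Fin r) (Fin r) ℂ) (B : Matrix (Fin r) (Fin n) ℂ)
    (C : Matrix (Fin n) (Fin r) ℂ)
    (hAE : IsUnit (A - μ • E))
    (R : Matrix (Fin n) (Fin n) ℂ)
    (hR : R = A0 + μ • A1 + C * ((A - μ • E)⁻¹ * B))
    (hRu : IsUnit R)
    (S : Matrix (Fin n) (Fin n ⊕ Fin n ⊕ Fin r) ℂ)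
    (hS : S = hcat3 R⁻¹ (μ • R⁻¹) (R⁻¹ * (C * (A - μ • E)⁻¹)))
    (hfull : IsUnit (S * Sᴴ))
    (v : Fin n → ℂ) (hv : evnorm v = 1)
    (hsing : (S * Sᴴ).mulVec v = ((sigmaMin Sᴴ : ℂ) ^ 2) • v)
    (Z : Matrix (Fin n) (Fin n) ℂ) (hZ : Z = (S * Sᴴ)⁻¹)
    (ΔA0 ΔA1 : Matrix (Fin n) (Fin n) ℂ) (ΔB : Matrix (Fin r) (Fin n) ℂ)
    (hΔA0 : ΔA0 = -((R⁻¹)ᴴ * Z * vecMulVec v (star v)))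
    (hΔA1 : ΔA1 = -(starRingEnd ℂ μ • ((R⁻¹)ᴴ * Z * vecMulVec v (star v))))
    (hΔB : ΔB = -((R⁻¹ * (C * (A - μ • E)⁻¹))ᴴ * Z * vecMulVec v (star v))) :
    ((1 : Matrix (Fin n) (Fin n) ℂ) +
        R⁻¹ * (ΔA0 + μ • ΔA1 + C * (A - μ • E)⁻¹ * ΔB)).mulVec v = 0 ∧
    (R + (ΔA0 + μ • ΔA1 + C * (A - μ • E)⁻¹ * ΔB)).det = 0 ∧
    frob (vcat3 ΔA0 ΔA1 ΔB) = 1 / sigmaMin Sᴴ := by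
  classical
  have hdet : IsUnit (S * Sᴴ).det := (Matrix.isUnit_iff_isUnit_det _).mp hfull
  have hZ1 : (S * Sᴴ) * Z = 1 := by rw [hZ]; exact Matrix.mul_nonsing_inv _ hdet
  have hZ2 : Z * (S * Sᴴ) = 1 := by rw [hZ]; exact Matrix.nonsing_inv_mul _ hdet
  -- norm facts about v
  have hsum1 : ∑ i, ‖v i‖ ^ 2 = (1 : ℝ) := Real.sqrt_eq_one.mp hv
  have hvv : star v ⬝ᵥ v = 1 := by
    have h : star v ⬝ᵥ v = ((∑ i, ‖v i‖ ^ 2 : ℝ) : ℂ) := by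
      simp only [dotProduct, Pi.star_apply, star_mul_self_eq_norm_sq]
      push_cast
      rfl
    rw [h, hsum1]; norm_num
  have hvne : v ≠ 0 := by
    intro h
    rw [h] at hv
    simp [evnorm] at hv
  -- S Sᴴ blockwise
  have hSS : S * Sᴴ = R⁻¹ * (R⁻¹)ᴴ + (μ • R⁻¹) * (μ • R⁻¹)ᴴ +
      (R⁻¹ * (C * (A - μ • E)⁻¹)) * (R⁻¹ * (C * (A - μ • E)⁻¹))ᴴ := by
    rw [hS, conjTranspose_hcat3, hcat3_mul_vcat3]
  -- key algebraic identity
  have key : R⁻¹ * (ΔA0 + μ • ΔA1 + C * (A - μ • E)⁻¹ * ΔB)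
      = -((S * Sᴴ) * (Z * vecMulVec v (star v))) := by
    rw [hΔA0, hΔA1, hΔB, hSS]
    exact key_aux μ R⁻¹ (C * (A - μ • E)⁻¹) Z (vecMulVec v (star v))
  have key2 : R⁻¹ * (ΔA0 + μ • ΔA1 + C * (A - μ • E)⁻¹ * ΔB) = -vecMulVec v (star v) := by
    rw [key, ← Matrix.mul_assoc, hZ1, Matrix.one_mul]
  have hPv : (vecMulVec v (star v)).mulVec v = v := by
    ext i
    have h : (vecMulVec v (star v)).mulVec v i = v i * (star v ⬝ᵥ v) := by
      simp [Matrix.mulVec, dotProduct, vecMulVec_apply, mul_assoc, Finset.mul_sum]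
    rw [h, hvv, mul_one]
  have part1 : ((1 : Matrix (Fin n) (Fin n) ℂ) +
      R⁻¹ * (ΔA0 + μ • ΔA1 + C * (A - μ • E)⁻¹ * ΔB)).mulVec v = 0 := by
    rw [key2, Matrix.add_mulVec, Matrix.one_mulVec, Matrix.neg_mulVec, hPv]
    simp
  refine ⟨part1, ?_, ?_⟩
  · -- determinant part
    have hRdet : IsUnit R.det := (Matrix.isUnit_iff_isUnit_det _).mp hRu
    have hfact : R + (ΔA0 + μ • ΔA1 + C * (A - μ • E)⁻¹ * ΔB) =
        R * ((1 : Matrix (Fin n) (Fin n) ℂ) +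
          R⁻¹ * (ΔA0 + μ • ΔA1 + C * (A - μ • E)⁻¹ * ΔB)) := by
      rw [Matrix.mul_add, Matrix.mul_one, ← Matrix.mul_assoc, Matrix.mul_nonsing_inv _ hRdet,
        Matrix.one_mul]
    rw [hfact, Matrix.det_mul]
    have h0 : ((1 : Matrix (Fin n) (Fin n) ℂ) +
        R⁻¹ * (ΔA0 + μ • ΔA1 + C * (A - μ • E)⁻¹ * ΔB)).det = 0 := by
      rw [← Matrix.exists_mulVec_eq_zero_iff]
      exact ⟨v, hvne, part1⟩
    rw [h0, mul_zero]
  · -- Frobenius norm part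
    set σ := sigmaMin Sᴴ with hσdef
    have hσ0 : 0 ≤ σ := by
      apply Real.sInf_nonneg
      rintro x ⟨w, -, rfl⟩
      exact Real.sqrt_nonneg _
    have hσne : σ ≠ 0 := by
      intro h
      have h1 : (S * Sᴴ).mulVec v = 0 := by
        rw [hsing, h]; simp
      have h2 : v = 0 := by
        have h3 := congrArg (Z.mulVec ·) h1
        simpa [Matrix.mulVec_mulVec, hZ2, Matrix.mulVec_zero] using h3
      exact hvne h2
    have hσpos : 0 < σ := lt_of_le_of_ne hσ0 (Ne.symm hσne)
    have hcne : ((σ : ℂ) ^ 2) ≠ 0 := by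
      simpa using pow_ne_zero 2 (Complex.ofReal_ne_zero.mpr hσne)
    have hZv : Z.mulVec v = ((σ : ℂ) ^ 2)⁻¹ • v := by
      have h1 : Z.mulVec ((S * Sᴴ).mulVec v) = v := by
        simp [Matrix.mulVec_mulVec, hZ2]
      rw [hsing, Matrix.mulVec_smul] at h1
      have h2 := congrArg (fun x => ((σ : ℂ) ^ 2)⁻¹ • x) h1
      simpa [smul_smul, inv_mul_cancel₀ hcne] using h2
    set u := Sᴴ.mulVec v with hu
    have hvcat : vcat3 ΔA0 ΔA1 ΔB = vecMulVec (-(((σ : ℂ) ^ 2)⁻¹ • u)) (star v) := by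
      have h1 : vcat3 ΔA0 ΔA1 ΔB = -(Sᴴ * (Z * vecMulVec v (star v))) := by
        rw [hΔA0, hΔA1, hΔB, hS, conjTranspose_hcat3]
        exact vcat_aux μ R⁻¹ (C * (A - μ • E)⁻¹) Z (vecMulVec v (star v))
      rw [h1, mul_vecMulVec', mul_vecMulVec', hZv, Matrix.mulVec_smul, ← hu]
      ext x y; simp [vecMulVec_apply, mul_assoc]
    -- sum of ‖u i‖^2 = σ^2
    have hsumu : ∑ i, ‖u i‖ ^ 2 = σ ^ 2 := by
      have hdot : star u ⬝ᵥ u = ((σ : ℂ) ^ 2) := by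
        rw [hu, Matrix.star_mulVec, Matrix.conjTranspose_conjTranspose,
          ← Matrix.dotProduct_mulVec, Matrix.mulVec_mulVec, hsing, dotProduct_smul,
          hvv, smul_eq_mul, mul_one]
      have hcast : star u ⬝ᵥ u = ((∑ i, ‖u i‖ ^ 2 : ℝ) : ℂ) := by
        simp only [dotProduct, Pi.star_apply, star_mul_self_eq_norm_sq]
        push_cast
        rfl
      rw [hcast] at hdot
      exact_mod_cast hdot
    rw [hvcat]
    unfold frob
    have hentry : ∀ (x : Fin n ⊕ Fin n ⊕ Fin r) (y : Fin n),
        ‖vecMulVec (-(((σ : ℂ) ^ 2)⁻¹ • u)) (star v) x y‖ ^ 2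
          = (σ ^ 2)⁻¹ ^ 2 * ‖u x‖ ^ 2 * ‖v y‖ ^ 2 := by
      intro x y
      simp only [vecMulVec_apply, Pi.neg_apply, Pi.smul_apply, smul_eq_mul, Pi.star_apply]
      rw [norm_mul, norm_neg, norm_mul, mul_pow, mul_pow, norm_star]
      congr 2
      rw [norm_inv, norm_pow, Complex.norm_real, Real.norm_eq_abs, abs_of_nonneg hσ0,
        inv_pow]
    have hsum : ∑ x, ∑ y, ‖vecMulVec (-(((σ : ℂ) ^ 2)⁻¹ • u)) (star v) x y‖ ^ 2
        = (σ ^ 2)⁻¹ ^ 2 * σ ^ 2 := by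
      calc ∑ x, ∑ y, ‖vecMulVec (-(((σ : ℂ) ^ 2)⁻¹ • u)) (star v) x y‖ ^ 2
          = ∑ x, ((σ ^ 2)⁻¹ ^ 2 * ‖u x‖ ^ 2) * ∑ y, ‖v y‖ ^ 2 := by
            refine Finset.sum_congr rfl fun x _ => ?_
            rw [Finset.mul_sum]
            exact Finset.sum_congr rfl fun y _ => hentry x y
        _ = (σ ^ 2)⁻¹ ^ 2 * σ ^ 2 := by
            simp only [hsum1, mul_one, ← Finset.mul_sum, hsumu]
    rw [hsum]
    rw [show (σ ^ 2)⁻¹ ^ 2 * σ ^ 2 = (1 / σ) ^ 2 by field_simp]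
    exact Real.sqrt_sq (by positivity)
end

section
/- Let P(λ) = Σ_{i=0}^{m} λⁱAᵢ with Aᵢ ∈ ℂ^{n×n}, let λ ∈ ℂ, and let x ∈ ℂⁿ be a unit vector. Define ΔAᵢ = −λ̄ⁱ/‖Λ_m‖₂² · (P(λ)x)x* for i = 0,…,m. Then (P(λ) + ΔP(λ))x = 0 where ΔP(λ) = Σ λⁱΔAᵢ, and ‖(‖ΔA₀‖₂, …, ‖ΔA_m‖₂)‖₂ = ‖P(λ)x‖₂/‖Λ_m‖₂, where ‖Λ_m‖₂ = ‖(1, λ, …, λᵐ)‖₂. Consequently the backward error η₂(x, λ, P) := min{‖(‖ΔA₀‖₂,…,‖ΔA_m‖₂)‖₂ : (P(λ)+ΔP(λ))x = 0} is at most ‖P(λ)x‖₂/‖Λ_m‖₂. -/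
open Matrix BigOperators

noncomputable def toE {n : ℕ} (v : Fin n → ℂ) : EuclideanSpace ℂ (Fin n) :=
  (WithLp.equiv 2 (Fin n → ℂ)).symm v

lemma evnorm_eq {n : ℕ} (v : Fin n → ℂ) : evnorm v = ‖toE v‖ := by
  rw [EuclideanSpace.norm_eq]; rfl

lemma toE_smul {n : ℕ} (a : ℂ) (v : Fin n → ℂ) : toE (a • v) = a • toE v := rfl

lemma evnorm_smul {n : ℕ} (a : ℂ) (v : Fin n → ℂ) : evnorm (a • v) = ‖a‖ * evnorm v := by
  rw [evnorm_eq, evnorm_eq, toE_smul, norm_smul]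

lemma dot_eq_inner {n : ℕ} (x v : Fin n → ℂ) : star x ⬝ᵥ v = inner ℂ (toE x) (toE v) := by
  simp [dotProduct, PiLp.inner_apply, RCLike.inner_apply, toE, mul_comm]

lemma mulVec_rankOne {n : ℕ} (c : ℂ) (u x v : Fin n → ℂ) :
    (c • vecMulVec u (star x)).mulVec v = (c * (star x ⬝ᵥ v)) • u := by
  funext i
  simp [mulVec, vecMulVec, dotProduct, Finset.mul_sum]
  rw [Finset.sum_mul]; exact Finset.sum_congr rfl fun j _ => by ring

lemma sigmaMax_rankOne {n : ℕ} (c : ℂ) (u x : Fin n → ℂ) (hx : evnorm x = 1) :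
    sigmaMax (c • vecMulVec u (star x)) = ‖c‖ * evnorm u := by
  have hx' : ‖toE x‖ = 1 := by rw [← evnorm_eq]; exact hx
  apply IsGreatest.csSup_eq
  constructor
  · refine ⟨x, hx, ?_⟩
    rw [mulVec_rankOne, evnorm_smul, dot_eq_inner, inner_self_eq_norm_sq_to_K, hx']
    norm_num
  · rintro y ⟨v, hv, rfl⟩
    have hv' : ‖toE v‖ = 1 := by rw [← evnorm_eq]; exact hv
    rw [mulVec_rankOne, evnorm_smul, dot_eq_inner, norm_mul]
    have h1 : ‖inner ℂ (toE x) (toE v)‖ ≤ 1 := by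
      calc ‖inner ℂ (toE x) (toE v)‖ ≤ ‖toE x‖ * ‖toE v‖ := norm_inner_le_norm _ _
        _ = 1 := by rw [hx', hv']; ring
    have h2 : 0 ≤ evnorm u := Real.sqrt_nonneg _
    nlinarith [norm_nonneg c, norm_nonneg (inner ℂ (toE x) (toE v)), mul_nonneg (norm_nonneg c) h2]

theorem stmt11 {n m : ℕ} (μ : ℂ)
    (Amat : Fin (m + 1) → Matrix (Fin n) (Fin n) ℂ)
    (x : Fin n → ℂ) (hx : evnorm x = 1)
    (P : Matrix (Fin n) (Fin n) ℂ) (hP : P = ∑ i : Fin (m + 1), μ ^ (i : ℕ) • Amat i)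
    (ΔA : Fin (m + 1) → Matrix (Fin n) (Fin n) ℂ)
    (hΔA : ∀ i, ΔA i = -(((starRingEnd ℂ μ) ^ (i : ℕ) / ((Lnorm m μ : ℂ)) ^ 2) •
        vecMulVec (P.mulVec x) (star x))) :
    (P + ∑ i : Fin (m + 1), μ ^ (i : ℕ) • ΔA i).mulVec x = 0 ∧
    Real.sqrt (∑ i, sigmaMax (ΔA i) ^ 2) = evnorm (P.mulVec x) / Lnorm m μ ∧
    sInf {ε | ∃ ΔA' : Fin (m + 1) → Matrix (Fin n) (Fin n) ℂ,
        (P + ∑ i : Fin (m + 1), μ ^ (i : ℕ) • ΔA' i).mulVec x = 0 ∧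
        ε = Real.sqrt (∑ i, sigmaMax (ΔA' i) ^ 2)} ≤
      evnorm (P.mulVec x) / Lnorm m μ := by
  set u := P.mulVec x with hu
  set L := Lnorm m μ with hLdef
  set S := ∑ i ∈ Finset.range (m + 1), ‖μ‖ ^ (2 * i) with hSdef
  have hSnn : 0 ≤ S := Finset.sum_nonneg fun i _ => pow_nonneg (norm_nonneg _) _
  have hS1 : 1 ≤ S := by
    have := Finset.single_le_sum (f := fun i => ‖μ‖ ^ (2 * i))
      (fun i _ => pow_nonneg (norm_nonneg _) _) (Finset.mem_range.2 (Nat.succ_pos m))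
    simpa using this
  have hL2 : L ^ 2 = S := Real.sq_sqrt hSnn
  have hLpos : 0 < L := Real.sqrt_pos.2 (lt_of_lt_of_le one_pos hS1)
  have hLCne : ((L : ℂ)) ^ 2 ≠ 0 :=
    pow_ne_zero 2 (Complex.ofReal_ne_zero.2 (ne_of_gt hLpos))
  have hx' : ‖toE x‖ = 1 := by rw [← evnorm_eq]; exact hx
  have hxx : star x ⬝ᵥ x = 1 := by
    rw [dot_eq_inner, inner_self_eq_norm_sq_to_K, hx']; norm_num
  have hμc : ∀ i : ℕ, μ ^ i * (starRingEnd ℂ μ) ^ i = ((‖μ‖ ^ (2 * i) : ℝ) : ℂ) := by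
    intro i
    rw [← mul_pow, Complex.mul_conj]
    push_cast
    rw [pow_mul]
    congr 1
    simp [Complex.normSq_eq_norm_sq]
  have hsum : ∑ i : Fin (m + 1), μ ^ (i : ℕ) • ΔA i = (-1 : ℂ) • vecMulVec u (star x) := by
    have step : ∀ i : Fin (m + 1), μ ^ (i : ℕ) • ΔA i =
        (-(((‖μ‖ ^ (2 * (i : ℕ)) : ℝ) : ℂ) / (L : ℂ) ^ 2)) • vecMulVec u (star x) := by
      intro i
      rw [hΔA i, smul_neg, smul_smul, ← neg_smul]
      congr 1
      rw [mul_div_assoc', hμc]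
    rw [Finset.sum_congr rfl fun i _ => step i, ← Finset.sum_smul]
    congr 1
    rw [Finset.sum_neg_distrib, ← Finset.sum_div]
    have hcast : ∑ i : Fin (m + 1), ((‖μ‖ ^ (2 * (i : ℕ)) : ℝ) : ℂ) = ((S : ℝ) : ℂ) := by
      rw [hSdef]; push_cast; rw [Fin.sum_univ_eq_sum_range (fun k => ((‖μ‖ : ℝ) : ℂ) ^ (2 * k))]
    rw [hcast, ← hL2]
    push_cast
    rw [div_self hLCne]
  have part1 : (P + ∑ i : Fin (m + 1), μ ^ (i : ℕ) • ΔA i).mulVec x = 0 := by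
    rw [add_mulVec, hsum, mulVec_rankOne, hxx]
    simp [hu]
  have hsig : ∀ i : Fin (m + 1), sigmaMax (ΔA i) = ‖μ‖ ^ (i : ℕ) / L ^ 2 * evnorm u := by
    intro i
    have : ΔA i = (-((starRingEnd ℂ μ) ^ (i : ℕ) / (L : ℂ) ^ 2)) • vecMulVec u (star x) := by
      rw [hΔA i, neg_smul]
    rw [this, sigmaMax_rankOne _ _ _ hx, norm_neg, norm_div, norm_pow, norm_pow,
      RCLike.norm_conj, Complex.norm_real, Real.norm_eq_abs, abs_of_pos hLpos]
  have part2 : Real.sqrt (∑ i, sigmaMax (ΔA i) ^ 2) = evnorm u / L := by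
    have hNnn : 0 ≤ evnorm u := Real.sqrt_nonneg _
    have hsq : ∑ i : Fin (m + 1), sigmaMax (ΔA i) ^ 2 = (evnorm u / L) ^ 2 := by
      have e1 : ∀ i : Fin (m + 1), sigmaMax (ΔA i) ^ 2
          = ‖μ‖ ^ (2 * (i : ℕ)) * (evnorm u / L ^ 2) ^ 2 := by
        intro i; rw [hsig i, pow_mul]; ring
      rw [Finset.sum_congr rfl fun i _ => e1 i, ← Finset.sum_mul,
        Fin.sum_univ_eq_sum_range (fun k => ‖μ‖ ^ (2 * k)), ← hSdef, ← hL2]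
      field_simp
    rw [hsq, Real.sqrt_sq (div_nonneg hNnn (le_of_lt hLpos))]
  refine ⟨part1, part2, ?_⟩
  have bdd : BddBelow {ε | ∃ ΔA' : Fin (m + 1) → Matrix (Fin n) (Fin n) ℂ,
      (P + ∑ i : Fin (m + 1), μ ^ (i : ℕ) • ΔA' i).mulVec x = 0 ∧
      ε = Real.sqrt (∑ i, sigmaMax (ΔA' i) ^ 2)} := by
    refine ⟨0, ?_⟩
    rintro ε ⟨A', _, rfl⟩
    exact Real.sqrt_nonneg _
  have := csInf_le bdd ⟨ΔA, part1, part2.symm⟩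
  exact this
end
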